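/- If g : R^n → R is convex differentiable with L-Lipschitz gradient, then g* is L⁻¹-strongly convex on the domain where it is finite. -/

import Mathlib

open Set

local notation "⟪" x ", " y "⟫" => @inner ℝ _ _ x y

lemma descent_lemma (n : ℕ) (L : ℝ) (hL : 0 < L)
    (g : EuclideanSpace ℝ (Fin n) → ℝ)
    (g' : EuclideanSpace ℝ (Fin n) → EuclideanSpace ℝ (Fin n))
    (hdiff : ∀ x, HasGradientAt g (g' x) x)
    (hlip : ∀ x y, ‖g' x - g' y‖ ≤ L * ‖x - y‖)
    (x u : EuclideanSpace ℝ (Fin n)) :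
    g u ≤ g x + ⟪g' x, u - x⟫ + L / 2 * ‖u - x‖ ^ 2 := by
  set d := u - x with hd
  have key : ∀ t : ℝ, HasDerivAt (fun s : ℝ => g (x + s • d))
      ⟪g' (x + t • d), d⟫ t := by
    intro t
    have h1 : HasDerivAt (fun s : ℝ => x + s • d) d t := by
      simpa using ((hasDerivAt_id t).smul_const d).const_add x
    have h2 := (hdiff (x + t • d)).hasFDerivAt
    have := h2.comp_hasDerivAt t h1
    simpa [Function.comp_def] using this
  have keyψ : ∀ t : ℝ, HasDerivAt
      (fun s : ℝ => g (x + s • d) - s * ⟪g' x, d⟫ - L / 2 * s ^ 2 * ‖d‖ ^ 2)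
      (⟪g' (x + t • d), d⟫ - ⟪g' x, d⟫ - L * t * ‖d‖ ^ 2) t := by
    intro t
    have h3 : HasDerivAt (fun s : ℝ => s * ⟪g' x, d⟫) (⟪g' x, d⟫) t := by
      simpa using (hasDerivAt_id t).mul_const (⟪g' x, d⟫)
    have h4 : HasDerivAt (fun s : ℝ => L / 2 * s ^ 2 * ‖d‖ ^ 2) (L * t * ‖d‖ ^ 2) t := by
      have : HasDerivAt (fun s : ℝ => s ^ 2) (2 * t) t := by
        simpa using hasDerivAt_pow 2 t
      have := (this.const_mul (L / 2)).mul_const (‖d‖ ^ 2)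
      exact this.congr_deriv (by ring)
    exact ((key t).sub h3).sub h4
  have hanti : AntitoneOn
      (fun s : ℝ => g (x + s • d) - s * ⟪g' x, d⟫ - L / 2 * s ^ 2 * ‖d‖ ^ 2)
      (Icc (0:ℝ) 1) := by
    apply antitoneOn_of_deriv_nonpos (convex_Icc 0 1)
    · exact fun t _ => (keyψ t).differentiableAt.continuousAt.continuousWithinAt
    · intro t ht
      exact (keyψ t).differentiableAt.differentiableWithinAt
    · intro t ht
      rw [(keyψ t).deriv]
      rw [interior_Icc] at ht
      have h5 : ⟪g' (x + t • d), d⟫ - ⟪g' x, d⟫ = ⟪g' (x + t • d) - g' x, d⟫ := by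
        rw [inner_sub_left]
      rw [h5]
      have h6 : ⟪g' (x + t • d) - g' x, d⟫ ≤ ‖g' (x + t • d) - g' x‖ * ‖d‖ :=
        real_inner_le_norm _ _
      have h7 : ‖g' (x + t • d) - g' x‖ ≤ L * (t * ‖d‖) := by
        have := hlip (x + t • d) x
        simpa [norm_smul, abs_of_pos ht.1, mul_assoc] using this
      nlinarith [ht.1.le, norm_nonneg d, norm_nonneg (g' (x + t • d) - g' x)]
  have h01 := hanti (left_mem_Icc.2 zero_le_one) (right_mem_Icc.2 zero_le_one) zero_le_one
  simp only [zero_smul, add_zero, one_smul, zero_mul, one_pow, mul_one] at h01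
  have hxu : x + d = u := by rw [hd]; abel
  rw [hxu] at h01
  linarith [h01]

set_option maxHeartbeats 1000000 in
theorem conjugate_of_smooth_is_strongly_convex
    (n : ℕ) (L : ℝ) (hL : 0 < L)
    (g : EuclideanSpace ℝ (Fin n) → ℝ)
    (g' : EuclideanSpace ℝ (Fin n) → EuclideanSpace ℝ (Fin n))
    (hconv : ConvexOn ℝ Set.univ g)
    (hdiff : ∀ x, HasGradientAt g (g' x) x)
    (hlip : ∀ x y, ‖g' x - g' y‖ ≤ L * ‖x - y‖)
    (gstar : EuclideanSpace ℝ (Fin n) → ℝ)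
    (hgstar : ∀ y, gstar y = sSup ((fun x => (inner ℝ x y : ℝ) - g x) '' Set.univ)) :
    StrongConvexOn {y | BddAbove ((fun x => (inner ℝ x y : ℝ) - g x) '' Set.univ)} L⁻¹ gstar := by
  have descent := descent_lemma n L hL g g' hdiff hlip
  have hLinv : L * L⁻¹ = 1 := mul_inv_cancel₀ hL.ne'
  constructor
  · -- convexity of the domain
    intro y hy z hz a b ha hb hab
    obtain ⟨My, hMy⟩ := hy
    obtain ⟨Mz, hMz⟩ := hz
    refine ⟨a * My + b * Mz, ?_⟩
    rintro p ⟨x, -, rfl⟩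
    have h1 : (inner ℝ x y : ℝ) - g x ≤ My := hMy ⟨x, mem_univ x, rfl⟩
    have h2 : (inner ℝ x z : ℝ) - g x ≤ Mz := hMz ⟨x, mem_univ x, rfl⟩
    have e1 : (inner ℝ x (a • y + b • z) : ℝ) = a * ⟪x, y⟫ + b * ⟪x, z⟫ := by
      rw [inner_add_right, real_inner_smul_right, real_inner_smul_right]
    simp only [e1]
    have hg : a * g x + b * g x = g x := by rw [← add_mul, hab, one_mul]
    have h1' := mul_le_mul_of_nonneg_left h1 ha
    have h2' := mul_le_mul_of_nonneg_left h2 hb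
    nlinarith [h1', h2', hg]
  · intro y hy z hz a b ha hb hab
    simp only [smul_eq_mul, hgstar]
    set w : EuclideanSpace ℝ (Fin n) := L⁻¹ • (y - z) with hw
    refine csSup_le (Set.Nonempty.image _ univ_nonempty) ?_
    rintro p ⟨x, -, rfl⟩
    have hA : (inner ℝ (x + b • w) y : ℝ) - g (x + b • w)
        ≤ sSup ((fun x => (inner ℝ x y : ℝ) - g x) '' univ) :=
      le_csSup hy ⟨_, mem_univ _, rfl⟩
    have hB : (inner ℝ (x - a • w) z : ℝ) - g (x - a • w)
        ≤ sSup ((fun x => (inner ℝ x z : ℝ) - g x) '' univ) :=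
      le_csSup hz ⟨_, mem_univ _, rfl⟩
    have e1 : (inner ℝ x (a • y + b • z) : ℝ) = a * ⟪x, y⟫ + b * ⟪x, z⟫ := by
      rw [inner_add_right, real_inner_smul_right, real_inner_smul_right]
    have e2 : (inner ℝ (x + b • w) y : ℝ) = ⟪x, y⟫ + b * ⟪w, y⟫ := by
      rw [inner_add_left, real_inner_smul_left]
    have e3 : (inner ℝ (x - a • w) z : ℝ) = ⟪x, z⟫ - a * ⟪w, z⟫ := by
      rw [inner_sub_left, real_inner_smul_left]
    have e4 : (⟪w, y⟫ : ℝ) - ⟪w, z⟫ = L⁻¹ * ‖y - z‖ ^ 2 := by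
      rw [← inner_sub_right, hw, real_inner_smul_left, real_inner_self_eq_norm_sq]
    have e5 : ‖w‖ ^ 2 = L⁻¹ ^ 2 * ‖y - z‖ ^ 2 := by
      rw [hw, norm_smul, mul_pow]
      simp [abs_of_pos (inv_pos.2 hL)]
    have d1 := descent x (x + b • w)
    have d2 := descent x (x - a • w)
    rw [add_sub_cancel_left] at d1
    rw [sub_sub_cancel_left] at d2
    have d1' : g (x + b • w) ≤ g x + b * ⟪g' x, w⟫ + L / 2 * (b ^ 2 * ‖w‖ ^ 2) := by
      have : (⟪g' x, b • w⟫ : ℝ) = b * ⟪g' x, w⟫ := real_inner_smul_right _ _ _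
      have hn : ‖b • w‖ ^ 2 = b ^ 2 * ‖w‖ ^ 2 := by
        rw [norm_smul, mul_pow, Real.norm_eq_abs, sq_abs]
      rw [this, hn] at d1
      linarith
    have d2' : g (x - a • w) ≤ g x - a * ⟪g' x, w⟫ + L / 2 * (a ^ 2 * ‖w‖ ^ 2) := by
      have h1 : (⟪g' x, -(a • w)⟫ : ℝ) = -(a * ⟪g' x, w⟫) := by
        rw [inner_neg_right, real_inner_smul_right]
      have h2 : ‖-(a • w)‖ ^ 2 = a ^ 2 * ‖w‖ ^ 2 := by
        rw [norm_neg, norm_smul, mul_pow, Real.norm_eq_abs, sq_abs]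
      rw [h1, h2] at d2
      linarith
    have key : (inner ℝ x (a • y + b • z) : ℝ) - g x
        ≤ a * ((inner ℝ (x + b • w) y : ℝ) - g (x + b • w))
          + b * ((inner ℝ (x - a • w) z : ℝ) - g (x - a • w))
          - a * b * (L⁻¹ / 2 * ‖y - z‖ ^ 2) := by
      have hN : L * ‖w‖ ^ 2 = L⁻¹ * ‖y - z‖ ^ 2 := by
        rw [e5]
        calc L * (L⁻¹ ^ 2 * ‖y - z‖ ^ 2) = L * L⁻¹ * (L⁻¹ * ‖y - z‖ ^ 2) := by ring
          _ = L⁻¹ * ‖y - z‖ ^ 2 := by rw [hLinv]; ring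
      have hcomb : a * (⟪x, y⟫ + b * ⟪w, y⟫ - (g x + b * ⟪g' x, w⟫ + L / 2 * (b ^ 2 * ‖w‖ ^ 2)))
          + b * (⟪x, z⟫ - a * ⟪w, z⟫ - (g x - a * ⟪g' x, w⟫ + L / 2 * (a ^ 2 * ‖w‖ ^ 2)))
          - a * b * (L⁻¹ / 2 * ‖y - z‖ ^ 2)
          = a * ⟪x, y⟫ + b * ⟪x, z⟫ - g x := by
        linear_combination (a * b) * e4 - (a * b / 2) * hN
          - (g x + L / 2 * a * b * ‖w‖ ^ 2) * hab
      rw [e1, e2, e3]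
      have hd1 := mul_le_mul_of_nonneg_left d1' ha
      have hd2 := mul_le_mul_of_nonneg_left d2' hb
      nlinarith [hd1, hd2, hcomb]
    refine le_trans key ?_
    have h1 := mul_le_mul_of_nonneg_left hA ha
    have h2 := mul_le_mul_of_nonneg_left hB hb
    linarith
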